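/- Let z > 0 be a fixed real number. Then there exists a constant C = C(z) > 0 such that for all real X ≥ 2, ∑_{m ≤ X} z^{ω(m)}/m ≤ C·(log X)^z, where the sum is over positive integers m ≤ X. -/

import Mathlib

open Finset Real



lemma pow_div_dvd_factorial {n p : ℕ} (hp : p ∈ Nat.primesBelow (n + 1)) :
    p ^ (n / p) ∣ n.factorial := by
  rw [Nat.mem_primesBelow] at hp
  obtain ⟨hplt, hpp⟩ := hp
  rcases Nat.eq_zero_or_pos (n / p) with h | h
  · simp [h]
  · have hlog : 0 < Nat.log p n := Nat.log_pos hpp.one_lt (Nat.le_of_lt_succ hplt)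
    rw [hpp.pow_dvd_factorial_iff (lt_add_one _)]
    calc n / p = n / p ^ 1 := by rw [pow_one]
      _ ≤ ∑ i ∈ Ico 1 (Nat.log p n + 1), n / p ^ i := by
          apply Finset.single_le_sum (f := fun i => n / p ^ i) (fun i _ => Nat.zero_le _)
          exact Finset.mem_Ico.mpr ⟨le_refl 1, by omega⟩

lemma prod_pow_div_dvd_factorial (n : ℕ) :
    (∏ p ∈ Nat.primesBelow (n + 1), p ^ (n / p)) ∣ n.factorial := by
  have hint : (∏ p ∈ Nat.primesBelow (n + 1), ((p : ℤ)) ^ (n / p)) ∣ (n.factorial : ℤ) := by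
    apply Finset.prod_dvd_of_coprime
    · intro p hp q hq hpq
      simp only [Finset.mem_coe, Nat.mem_primesBelow] at hp hq
      have : IsCoprime ((p ^ (n / p) : ℕ) : ℤ) ((q ^ (n / q) : ℕ) : ℤ) :=
        Nat.isCoprime_iff_coprime.mpr
          (Nat.Coprime.pow _ _ ((Nat.coprime_primes hp.2 hq.2).mpr hpq))
      push_cast at this
      exact this
    · intro p hp
      exact_mod_cast Int.natCast_dvd_natCast.mpr (pow_div_dvd_factorial hp)
  have : ((∏ p ∈ Nat.primesBelow (n + 1), p ^ (n / p) : ℕ) : ℤ) ∣ (n.factorial : ℤ) := by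
    push_cast
    exact hint
  exact_mod_cast this

lemma mertens_first (n : ℕ) (hn : 2 ≤ n) :
    ∑ p ∈ Nat.primesBelow (n + 1), Real.log p / p ≤ Real.log n + Real.log 4 := by
  have hn0 : (0:ℝ) < n := by positivity
  have h1 : ∑ p ∈ Nat.primesBelow (n + 1), ((n / p : ℕ) : ℝ) * Real.log p
      ≤ (n : ℝ) * Real.log n := by
    have hd := prod_pow_div_dvd_factorial n
    have hle : ((∏ p ∈ Nat.primesBelow (n + 1), p ^ (n / p) : ℕ) : ℝ) ≤ (n.factorial : ℝ) := by
      exact_mod_cast Nat.le_of_dvd n.factorial_pos hd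
    have hfact : ((n.factorial : ℕ) : ℝ) ≤ (n : ℝ) ^ n := by exact_mod_cast Nat.factorial_le_pow n
    have hprodpos : (0:ℝ) < ((∏ p ∈ Nat.primesBelow (n + 1), p ^ (n / p) : ℕ) : ℝ) := by
      have : 0 < ∏ p ∈ Nat.primesBelow (n + 1), p ^ (n / p) :=
        Finset.prod_pos fun p hp => pow_pos (Nat.mem_primesBelow.mp hp).2.pos _
      exact_mod_cast this
    have hlog := Real.log_le_log hprodpos (hle.trans hfact)
    rw [Real.log_pow] at hlog
    calc ∑ p ∈ Nat.primesBelow (n + 1), ((n / p : ℕ) : ℝ) * Real.log p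
        = Real.log ((∏ p ∈ Nat.primesBelow (n + 1), p ^ (n / p) : ℕ) : ℝ) := by
          push_cast
          rw [Real.log_prod]
          · refine Finset.sum_congr rfl fun p hp => ?_
            rw [Real.log_pow]
          · intro p hp
            have := (Nat.mem_primesBelow.mp hp).2.pos
            positivity
      _ ≤ (n : ℝ) * Real.log n := hlog
  have h2 : ∑ p ∈ Nat.primesBelow (n + 1), Real.log p ≤ (n : ℝ) * Real.log 4 := by
    have hle : ((primorial n : ℕ) : ℝ) ≤ (4 : ℝ) ^ n := by
      exact_mod_cast primorial_le_4_pow n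
    have hlog := Real.log_le_log (by exact_mod_cast primorial_pos n) hle
    rw [Real.log_pow] at hlog
    calc ∑ p ∈ Nat.primesBelow (n + 1), Real.log p
        = Real.log ((primorial n : ℕ) : ℝ) := by
          rw [primorial]
          push_cast
          rw [Real.log_prod]
          · rfl
          · intro p hp
            simp only [Finset.mem_filter, Finset.mem_range] at hp
            have := hp.2.pos
            positivity
      _ ≤ (n : ℝ) * Real.log 4 := hlog
  have h3 : ∀ p ∈ Nat.primesBelow (n + 1),
      (n : ℝ) / p * Real.log p ≤ ((n / p : ℕ) : ℝ) * Real.log p + Real.log p := by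
    intro p hp
    have hpp := (Nat.mem_primesBelow.mp hp).2
    have hp0 : (0:ℝ) < p := by exact_mod_cast hpp.pos
    have hlogp : 0 ≤ Real.log p := Real.log_nonneg (by exact_mod_cast hpp.one_lt.le)
    have : (n : ℝ) / p ≤ ((n / p : ℕ) : ℝ) + 1 := by
      rw [div_le_iff₀ hp0]
      have hlt : n < p * (n / p) + p := by
        have h := Nat.div_add_mod n p
        have h2 := Nat.mod_lt n hpp.pos
        omega
      have : (n:ℝ) < (p:ℝ) * ((n / p : ℕ):ℝ) + p := by exact_mod_cast hlt
      nlinarith [this]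
    nlinarith [this, hlogp]
  have h4 : ∑ p ∈ Nat.primesBelow (n + 1), (n : ℝ) / p * Real.log p
      ≤ (n : ℝ) * Real.log n + (n : ℝ) * Real.log 4 := by
    calc ∑ p ∈ Nat.primesBelow (n + 1), (n : ℝ) / p * Real.log p
        ≤ ∑ p ∈ Nat.primesBelow (n + 1), (((n / p : ℕ) : ℝ) * Real.log p + Real.log p) :=
          Finset.sum_le_sum h3
      _ = _ + _ := Finset.sum_add_distrib
      _ ≤ _ := add_le_add h1 h2
  have heq : ∑ p ∈ Nat.primesBelow (n + 1), Real.log p / p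
      = (1 / n) * ∑ p ∈ Nat.primesBelow (n + 1), (n : ℝ) / p * Real.log p := by
    rw [Finset.mul_sum]
    refine Finset.sum_congr rfl fun p hp => ?_
    have hp0 : (0:ℝ) < p := by exact_mod_cast (Nat.mem_primesBelow.mp hp).2.pos
    field_simp
  rw [heq, one_div, inv_mul_le_iff₀ hn0]
  nlinarith [h4]



noncomputable def mc (n : ℕ) : ℝ := if n.Prime then Real.log n / n else 0

noncomputable def mA (m : ℕ) : ℝ := ∑ n ∈ Finset.Icc 2 m, mc n

lemma mc_nonneg (n : ℕ) : 0 ≤ mc n := by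
  unfold mc
  split_ifs with h
  · have : (0:ℝ) < n := by exact_mod_cast h.pos
    have := Real.log_nonneg (by exact_mod_cast h.one_lt.le : (1:ℝ) ≤ n)
    positivity
  · exact le_refl 0

lemma mA_nonneg (m : ℕ) : 0 ≤ mA m := Finset.sum_nonneg fun n _ => mc_nonneg n

lemma mA_eq_primes (m : ℕ) :
    mA m = ∑ p ∈ Nat.primesBelow (m + 1), Real.log p / p := by
  unfold mA
  rw [Nat.primesBelow, Finset.sum_filter]
  apply Finset.sum_subset
  · intro x hx
    rw [Finset.mem_Icc] at hx
    exact Finset.mem_range.mpr (by omega)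
  · intro x hxr hx
    rw [Finset.mem_Icc] at hx
    have hxm : x < m + 1 := Finset.mem_range.mp hxr
    have : ¬ x.Prime := fun hp => hx ⟨hp.two_le, by omega⟩
    simp [mc, this]

lemma abel_identity : ∀ N, 2 ≤ N →
    ∑ n ∈ Finset.Icc 2 N, mc n / Real.log n
      = mA N / Real.log N
        + ∑ m ∈ Finset.Ico 2 N, (1 / Real.log m - 1 / Real.log (m + 1)) * mA m := by
  intro N hN
  induction N with
  | zero => omega
  | succ N ih =>
    rcases Nat.lt_or_ge N 2 with h | h
    · interval_cases N
      · omega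
      · -- N + 1 = 2
        norm_num [mA, mc]
    · have ih := ih h
      rw [Finset.sum_Icc_succ_top (by omega : 2 ≤ N + 1), ih,
        Finset.sum_Ico_succ_top (by omega : 2 ≤ N)]
      have hAN : mA (N + 1) = mA N + mc (N + 1) := by
        rw [mA, mA, Finset.sum_Icc_succ_top (by omega : 2 ≤ N + 1)]
      rw [hAN]
      have hlogN : Real.log N ≠ 0 := by
        have : (1:ℝ) < N := by exact_mod_cast h
        exact ne_of_gt (Real.log_pos this)
      have hlogN1 : Real.log (N + 1 : ℕ) ≠ 0 := by
        have : (1:ℝ) < (N + 1 : ℕ) := by exact_mod_cast (by omega : 1 < N + 1)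
        exact ne_of_gt (Real.log_pos this)
      push_cast at *
      field_simp
      ring

-- telescoping over Ico
lemma tele (f : ℕ → ℝ) {a b : ℕ} (hab : a ≤ b) :
    ∑ m ∈ Finset.Ico a b, (f (m + 1) - f m) = f b - f a := by
  rw [Finset.sum_Ico_eq_sub _ hab, Finset.sum_range_sub, Finset.sum_range_sub]
  ring

lemma log_ratio_le {a b : ℝ} (ha : 0 < a) (hab : a ≤ b) :
    (b - a) / b ≤ Real.log b - Real.log a := by
  have hb : 0 < b := lt_of_lt_of_le ha hab
  have h := Real.log_le_sub_one_of_pos (show 0 < a / b by positivity)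
  rw [Real.log_div (ne_of_gt ha) (ne_of_gt hb)] at h
  have : (b - a) / b = 1 - a / b := by field_simp
  linarith [this.le, h]


noncomputable def mB : ℝ := 1 + 2 * Real.log 4 / Real.log 2 - Real.log (Real.log 2)

lemma mA_le (m : ℕ) (hm : 2 ≤ m) : mA m ≤ Real.log m + Real.log 4 := by
  rw [mA_eq_primes]; exact mertens_first m hm

lemma sum_primes_inv_eq (N : ℕ) :
    ∑ p ∈ Nat.primesBelow (N + 1), 1 / (p : ℝ)
      = ∑ n ∈ Finset.Icc 2 N, mc n / Real.log n := by
  rw [Nat.primesBelow, Finset.sum_filter]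
  symm
  have hstep : ∀ n ∈ Finset.Icc 2 N, mc n / Real.log n
      = (if n.Prime then 1 / (n:ℝ) else 0) := by
    intro n hn
    rw [Finset.mem_Icc] at hn
    have hlogn : Real.log n ≠ 0 :=
      ne_of_gt (Real.log_pos (by exact_mod_cast (by omega : 1 < n)))
    unfold mc
    split_ifs with h
    · have hn0 : (0:ℝ) < n := by exact_mod_cast (by omega : 0 < n)
      rw [div_right_comm, div_self hlogn]
    · simp
  rw [Finset.sum_congr rfl hstep]
  apply Finset.sum_subset
  · intro x hx
    rw [Finset.mem_Icc] at hx
    exact Finset.mem_range.mpr (by omega)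
  · intro x hxr hx
    rw [Finset.mem_Icc] at hx
    have hxm : x < N + 1 := Finset.mem_range.mp hxr
    have : ¬ x.Prime := fun hp => hx ⟨hp.two_le, by omega⟩
    simp [this]

lemma mertens_second (N : ℕ) (hN : 2 ≤ N) :
    ∑ p ∈ Nat.primesBelow (N + 1), 1 / (p : ℝ)
      ≤ Real.log (Real.log N) + mB := by
  have hlog2pos : (0:ℝ) < Real.log 2 := Real.log_pos (by norm_num)
  have hlogNpos : (0:ℝ) < Real.log N :=
    Real.log_pos (by exact_mod_cast (by omega : 1 < N))
  have hlogmono : ∀ {a b : ℕ}, 2 ≤ a → a ≤ b → Real.log a ≤ Real.log b := by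
    intro a b ha hab
    exact Real.log_le_log (by exact_mod_cast (by omega : 0 < a)) (by exact_mod_cast hab)
  rw [sum_primes_inv_eq, abel_identity N hN]
  have hlog4 : (0:ℝ) ≤ Real.log 4 := Real.log_nonneg (by norm_num)
  have h2N : Real.log 2 ≤ Real.log ((N:ℕ)) := hlogmono le_rfl hN
  -- Bound the first term
  have hA_N : mA N / Real.log N ≤ 1 + Real.log 4 / Real.log 2 := by
    have h1 : mA N / Real.log N ≤ (Real.log N + Real.log 4) / Real.log N := by
      gcongr
      exact mA_le N hN
    have h2 : (Real.log N + Real.log 4) / Real.log N = 1 + Real.log 4 / Real.log N := by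
      field_simp
    have h3 : Real.log 4 / Real.log N ≤ Real.log 4 / Real.log 2 := by gcongr
    linarith
  -- Bound each term of the sum
  have hterm : ∀ m ∈ Finset.Ico 2 N,
      (1 / Real.log m - 1 / Real.log (m + 1)) * mA m
        ≤ (Real.log (Real.log ((m+1:ℕ))) - Real.log (Real.log m))
          + Real.log 4 * (1 / Real.log m - 1 / Real.log ((m+1:ℕ))) := by
    intro m hm
    rw [Finset.mem_Ico] at hm
    have hm2 : 2 ≤ m := hm.1
    have hlm : (0:ℝ) < Real.log m :=
      Real.log_pos (by exact_mod_cast (by omega : 1 < m))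
    have hlm1 : (0:ℝ) < Real.log ((m+1:ℕ)) :=
      Real.log_pos (by exact_mod_cast (by omega : 1 < m + 1))
    have hle : Real.log m ≤ Real.log ((m+1:ℕ)) := hlogmono hm2 (by omega)
    have hcast : Real.log ((m:ℝ) + 1) = Real.log ((m+1:ℕ)) := by push_cast; ring_nf
    rw [hcast]
    set a := Real.log m with ha
    set b := Real.log ((m+1:ℕ)) with hb
    have hd : 0 ≤ 1 / a - 1 / b := by
      have := one_div_le_one_div_of_le hlm hle
      linarith
    have hAle := mA_le m hm2
    have hAnn := mA_nonneg m
    have heq : (1 / a - 1 / b) * a = (b - a) / b := by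
      field_simp
    have key : (1 / a - 1 / b) * a ≤ Real.log b - Real.log a := by
      rw [heq]
      exact log_ratio_le hlm hle
    nlinarith [hd, hAle, hAnn, key, mul_le_mul_of_nonneg_left hAle hd]
  have hsum : ∑ m ∈ Finset.Ico 2 N, (1 / Real.log m - 1 / Real.log (m + 1)) * mA m
      ≤ (Real.log (Real.log N) - Real.log (Real.log 2))
        + Real.log 4 * (1 / Real.log 2 - 1 / Real.log N) := by
    calc ∑ m ∈ Finset.Ico 2 N, (1 / Real.log m - 1 / Real.log (m + 1)) * mA m
        ≤ ∑ m ∈ Finset.Ico 2 N,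
            ((Real.log (Real.log ((m+1:ℕ))) - Real.log (Real.log m))
              + Real.log 4 * (1 / Real.log m - 1 / Real.log ((m+1:ℕ)))) :=
          Finset.sum_le_sum hterm
      _ = (Real.log (Real.log N) - Real.log (Real.log 2))
            + Real.log 4 * (1 / Real.log 2 - 1 / Real.log N) := by
          rw [Finset.sum_add_distrib, ← Finset.mul_sum]
          have t1 := tele (fun m => Real.log (Real.log m)) hN
          have h := tele (fun m => -(1 / Real.log m)) hN
          have h2 : ∑ m ∈ Finset.Ico 2 N, (1 / Real.log (m:ℕ) - 1 / Real.log ((m+1:ℕ)))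
              = ∑ m ∈ Finset.Ico 2 N,
                  (-(1 / Real.log ((m+1:ℕ))) - -(1 / Real.log (m:ℕ))) :=
            Finset.sum_congr rfl fun m _ => by ring
          rw [t1, h2, h]
          push_cast
          ring
  unfold mB
  have hfinal : Real.log 4 * (1 / Real.log 2 - 1 / Real.log N) ≤ Real.log 4 / Real.log 2 := by
    have h0 : 0 ≤ 1 / Real.log N := by positivity
    have h1 : 1 / Real.log 2 - 1 / Real.log N ≤ 1 / Real.log 2 := by linarith
    calc Real.log 4 * (1 / Real.log 2 - 1 / Real.log N)
        ≤ Real.log 4 * (1 / Real.log 2) := by nlinarith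
      _ = Real.log 4 / Real.log 2 := by ring
  have hsum2 : ∑ m ∈ Finset.Ico 2 N, (1 / Real.log m - 1 / Real.log (m + 1)) * mA m
      ≤ Real.log (Real.log N) - Real.log (Real.log 2) + Real.log 4 / Real.log 2 :=
    hsum.trans (by linarith [hfinal])
  calc mA N / Real.log N + ∑ m ∈ Finset.Ico 2 N, (1 / Real.log m - 1 / Real.log (m + 1)) * mA m
      ≤ (1 + Real.log 4 / Real.log 2)
        + (Real.log (Real.log N) - Real.log (Real.log 2) + Real.log 4 / Real.log 2) :=
      add_le_add hA_N hsum2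
    _ = Real.log (Real.log N) + (1 + 2 * Real.log 4 / Real.log 2 - Real.log (Real.log 2)) := by
      ring



noncomputable def Fz (z : ℝ) : ℕ → ℝ := fun m => z ^ m.primeFactors.card / m

lemma Fz_one (z : ℝ) : Fz z 1 = 1 := by simp [Fz]

lemma Fz_nonneg {z : ℝ} (hz : 0 < z) (m : ℕ) : 0 ≤ Fz z m := by
  unfold Fz; positivity

lemma Fz_mul {z : ℝ} {m n : ℕ} (h : Nat.Coprime m n) : Fz z (m * n) = Fz z m * Fz z n := by
  rcases eq_or_ne m 0 with rfl | hm
  · rcases Nat.coprime_zero_left n |>.mp h with rfl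
    simp [Fz]
  rcases eq_or_ne n 0 with rfl | hn
  · rcases Nat.coprime_zero_right m |>.mp h with rfl
    simp [Fz]
  unfold Fz
  rw [Nat.Coprime.primeFactors_mul h,
    Finset.card_union_of_disjoint (Nat.Coprime.disjoint_primeFactors h)]
  push_cast
  rw [pow_add]
  field_simp

lemma Fz_prime_pow {z : ℝ} {p : ℕ} (hp : p.Prime) (e : ℕ) :
    Fz z (p ^ (e + 1)) = z / (p : ℝ) ^ (e + 1) := by
  unfold Fz
  rw [Nat.primeFactors_prime_pow (by omega) hp]
  push_cast
  simp

lemma Fz_hasSum_prime {z : ℝ} (hz : 0 < z) {p : ℕ} (hp : p.Prime) :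
    HasSum (fun e : ℕ => Fz z (p ^ e)) (1 + z / ((p : ℝ) - 1)) := by
  have hp1 : (1:ℝ) < (p:ℝ) := by exact_mod_cast hp.one_lt
  have hp0 : (0:ℝ) < (p:ℝ) := by linarith
  have hpm1 : (0:ℝ) < (p:ℝ) - 1 := by linarith
  have hinv : (1:ℝ) / (p:ℝ) < 1 := by rw [div_lt_one hp0]; exact hp1
  have hinv0 : (0:ℝ) ≤ 1 / (p:ℝ) := by positivity
  have hgeo : HasSum (fun e : ℕ => (z / (p:ℝ)) * (1 / (p:ℝ)) ^ e)
      ((z / (p:ℝ)) * (1 - 1 / (p:ℝ))⁻¹) :=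
    (hasSum_geometric_of_lt_one hinv0 hinv).mul_left (z / (p:ℝ))
  have hval : (z / (p:ℝ)) * ((1:ℝ) - 1 / (p:ℝ))⁻¹ = z / ((p : ℝ) - 1) := by
    have h1 : (1:ℝ) - 1 / (p:ℝ) ≠ 0 := by
      have : (0:ℝ) < 1 - 1 / (p:ℝ) := by
        rw [sub_pos]
        exact hinv
      linarith
    field_simp
  have hshift : HasSum (fun e : ℕ => Fz z (p ^ (e + 1))) (z / ((p : ℝ) - 1)) := by
    rw [← hval]
    convert hgeo using 2 with e
    rw [Fz_prime_pow hp, div_pow, one_pow, pow_succ]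
    field_simp
  have h := (hasSum_nat_add_iff (f := fun e : ℕ => Fz z (p ^ e)) 1).mp hshift
  simp only [Finset.range_one, Finset.sum_singleton, pow_zero, Fz_one] at h
  convert h using 1
  · rfl
  ring

lemma euler_bound {z : ℝ} (hz : 0 < z) (N : ℕ) :
    ∑ m ∈ Finset.Icc 1 N, Fz z m
      ≤ ∏ p ∈ Nat.primesBelow (N + 1), (1 + z / ((p : ℝ) - 1)) := by
  have hmul : ∀ {m n : ℕ}, Nat.Coprime m n → Fz z (m * n) = Fz z m * Fz z n :=
    fun h => Fz_mul h
  have hsum : ∀ {p : ℕ}, p.Prime → Summable (fun e : ℕ => ‖Fz z (p ^ e)‖) := by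
    intro p hp
    have : ∀ e : ℕ, ‖Fz z (p ^ e)‖ = Fz z (p ^ e) := fun e =>
      Real.norm_of_nonneg (Fz_nonneg hz _)
    simp only [this]
    exact (Fz_hasSum_prime hz hp).summable
  have hmain := (EulerProduct.summable_and_hasSum_smoothNumbers_prod_primesBelow_tsum
    (f := Fz z) (Fz_one z) hmul hsum (N + 1)).2
  have htsum : ∀ p ∈ Nat.primesBelow (N + 1),
      ∑' e : ℕ, Fz z (p ^ e) = 1 + z / ((p : ℝ) - 1) := fun p hp =>
    (Fz_hasSum_prime hz (Nat.mem_primesBelow.mp hp).2).tsum_eq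
  rw [Finset.prod_congr rfl htsum] at hmain
  -- now bound the finite sum by the HasSum value
  have hfin : ∑ m ∈ Finset.Icc 1 N, Fz z m
      = ∑ x ∈ Finset.subtype (fun m => m ∈ (N + 1).smoothNumbers) (Finset.Icc 1 N),
          Fz z (x : ℕ) := by
    rw [Finset.sum_subtype_eq_sum_filter]
    rw [Finset.filter_true_of_mem]
    intro m hm
    rw [Finset.mem_Icc] at hm
    exact Nat.mem_smoothNumbers_of_lt (by omega) (by omega)
  rw [hfin]
  exact sum_le_hasSum _ (fun i _ => Fz_nonneg hz _) hmain




lemma sum_inv_sub_one_le (N : ℕ) (hN : 2 ≤ N) :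
    ∑ p ∈ Nat.primesBelow (N + 1), 1 / ((p : ℝ) - 1)
      ≤ ∑ p ∈ Nat.primesBelow (N + 1), 1 / (p : ℝ) + 1 := by
  have hsub : Nat.primesBelow (N + 1) ⊆ Finset.Icc 2 N := by
    intro p hp
    rw [Nat.mem_primesBelow] at hp
    exact Finset.mem_Icc.mpr ⟨hp.2.two_le, by omega⟩
  have hdiff : ∑ p ∈ Nat.primesBelow (N + 1), (1 / ((p : ℝ) - 1) - 1 / p) ≤ 1 := by
    have h1 : ∑ p ∈ Nat.primesBelow (N + 1), (1 / ((p : ℝ) - 1) - 1 / p)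
        ≤ ∑ n ∈ Finset.Icc 2 N, (1 / ((n : ℝ) - 1) - 1 / n) := by
      apply Finset.sum_le_sum_of_subset_of_nonneg hsub
      intro n hn _
      rw [Finset.mem_Icc] at hn
      have h2 : (2:ℝ) ≤ (n:ℝ) := by exact_mod_cast hn.1
      have hn1 : (0:ℝ) < (n:ℝ) - 1 := by linarith
      have hn0 : (0:ℝ) < (n:ℝ) := by linarith
      rw [sub_nonneg]
      apply one_div_le_one_div_of_le hn1 (by linarith)
    have h2 : ∑ n ∈ Finset.Icc 2 N, (1 / ((n : ℝ) - 1) - 1 / n) = 1 - 1 / N := by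
      have h3 : Finset.Icc 2 N = Finset.Ico 2 (N + 1) := by
        rw [Finset.Ico_add_one_right_eq_Icc]
      rw [h3]
      set g : ℕ → ℝ := fun n => -(1 / ((n : ℝ) - 1)) with hg
      have h4 := tele g (by omega : 2 ≤ N + 1)
      have h5 : ∑ n ∈ Finset.Ico 2 (N + 1), (1 / ((n : ℝ) - 1) - 1 / n)
          = ∑ n ∈ Finset.Ico 2 (N + 1), (g (n + 1) - g n) := by
        apply Finset.sum_congr rfl
        intro n hn
        rw [Finset.mem_Ico] at hn
        rw [hg]
        push_cast
        ring
      rw [h5, h4, hg]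
      push_cast
      norm_num
      ring
    have hN0 : (0:ℝ) < (N:ℝ) := by exact_mod_cast (by omega : 0 < N)
    have : (0:ℝ) ≤ 1 / N := by positivity
    linarith [h1, h2.le, h2.ge]
  have := Finset.sum_sub_distrib (s := Nat.primesBelow (N + 1))
    (f := fun p => 1 / ((p : ℝ) - 1)) (g := fun p => 1 / (p : ℝ))
  linarith [hdiff, this.ge, this.le]

/-- Lemma 2.1: for fixed `z > 0`, `∑_{m ≤ X} z^{ω(m)}/m ≪_z (log X)^z`. -/
theorem harmonic_omega_sum_bound (z : ℝ) (hz : 0 < z) :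
    ∃ C : ℝ, 0 < C ∧ ∀ X : ℝ, 2 ≤ X →
      ∑ m ∈ Finset.Icc 1 ⌊X⌋₊, z ^ m.primeFactors.card / (m : ℝ)
        ≤ C * (Real.log X) ^ z := by
  refine ⟨Real.exp (z * (mB + 1)), Real.exp_pos _, fun X hX => ?_⟩
  set N := ⌊X⌋₊ with hNdef
  have hN2 : 2 ≤ N := Nat.le_floor (by exact_mod_cast hX)
  have hX0 : (0:ℝ) ≤ X := by linarith
  have hNX : (N : ℝ) ≤ X := Nat.floor_le hX0
  have hN0 : (0:ℝ) < (N:ℝ) := by exact_mod_cast (by omega : 0 < N)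
  have hlogN : (0:ℝ) < Real.log N := Real.log_pos (by exact_mod_cast (by omega : 1 < N))
  have hlogX : (0:ℝ) < Real.log X := Real.log_pos (by linarith)
  have hloglog : Real.log (Real.log N) ≤ Real.log (Real.log X) :=
    Real.log_le_log hlogN (Real.log_le_log hN0 hNX)
  -- step 1: Euler product
  have h1 : ∑ m ∈ Finset.Icc 1 N, Fz z m
      ≤ ∏ p ∈ Nat.primesBelow (N + 1), (1 + z / ((p : ℝ) - 1)) := euler_bound hz N
  -- step 2: product ≤ exp of sum
  have h2 : ∏ p ∈ Nat.primesBelow (N + 1), (1 + z / ((p : ℝ) - 1))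
      ≤ Real.exp (∑ p ∈ Nat.primesBelow (N + 1), z / ((p : ℝ) - 1)) := by
    rw [Real.exp_sum]
    apply Finset.prod_le_prod
    · intro p hp
      have hp2 : (2:ℝ) ≤ (p:ℝ) := by
        exact_mod_cast (Nat.mem_primesBelow.mp hp).2.two_le
      have : (0:ℝ) < (p:ℝ) - 1 := by linarith
      positivity
    · intro p hp
      linarith [Real.add_one_le_exp (z / ((p : ℝ) - 1))]
  -- step 3: bound the sum of z/(p-1)
  have h3 : ∑ p ∈ Nat.primesBelow (N + 1), z / ((p : ℝ) - 1)
      ≤ z * (Real.log (Real.log X) + mB + 1) := by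
    have he : ∑ p ∈ Nat.primesBelow (N + 1), z / ((p : ℝ) - 1)
        = z * ∑ p ∈ Nat.primesBelow (N + 1), 1 / ((p : ℝ) - 1) := by
      rw [Finset.mul_sum]
      apply Finset.sum_congr rfl
      intro p _
      rw [mul_one_div]
    rw [he]
    apply mul_le_mul_of_nonneg_left _ hz.le
    calc ∑ p ∈ Nat.primesBelow (N + 1), 1 / ((p : ℝ) - 1)
        ≤ ∑ p ∈ Nat.primesBelow (N + 1), 1 / (p : ℝ) + 1 := sum_inv_sub_one_le N hN2
      _ ≤ (Real.log (Real.log N) + mB) + 1 := by linarith [mertens_second N hN2]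
      _ ≤ Real.log (Real.log X) + mB + 1 := by linarith [hloglog]
  -- final
  have hrpow : (Real.log X) ^ z = Real.exp (z * Real.log (Real.log X)) := by
    rw [Real.rpow_def_of_pos hlogX]
    ring_nf
  calc ∑ m ∈ Finset.Icc 1 N, z ^ m.primeFactors.card / (m : ℝ)
      = ∑ m ∈ Finset.Icc 1 N, Fz z m := rfl
    _ ≤ Real.exp (∑ p ∈ Nat.primesBelow (N + 1), z / ((p : ℝ) - 1)) := h1.trans h2
    _ ≤ Real.exp (z * (Real.log (Real.log X) + mB + 1)) := Real.exp_le_exp.mpr h3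
    _ = Real.exp (z * (mB + 1)) * (Real.log X) ^ z := by
        rw [hrpow, ← Real.exp_add]
        ring_nf
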